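/- Let Σ be the n×n Toeplitz matrix with entries ρ^{|i-j|}, ρ ∈ [0,1), let r > 1 and σ² > 0. If σ² > ((r-1)/r)·(1+ρ)/(1-ρ), then the matrix Iₙ + r σ² (Σ^{-1} − σ^{-2} Iₙ) = (1-r) Iₙ + r σ² Σ^{-1} is positive definite, and hence the r-th moment E_Q[L^r] of the likelihood ratio between N(0,Σ) and N(0, σ² Iₙ) is finite. -/

import Mathlib

open MeasureTheory Real Matrix

/-- Density of the centered `n`-dimensional Gaussian `N(0, S)` at `x`. -/
noncomputable def mvGaussPdf {n : ℕ} (S : Matrix (Fin n) (Fin n) ℝ)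
    (x : Fin n → ℝ) : ℝ :=
  ((2 * Real.pi) ^ (n : ℝ) * S.det) ^ (-(1 : ℝ) / 2) *
    Real.exp (-(x ⬝ᵥ S⁻¹.mulVec x) / 2)


/-- tridiagonal matrix `(1-ρ²) S⁻¹` for the AR(1) Toeplitz matrix `S`. -/
noncomputable def Tm (n : ℕ) (ρ : ℝ) : Matrix (Fin n) (Fin n) ℝ := fun i j =>
  (if (j : ℕ) = (i : ℕ) + 1 then -ρ else 0) +
  (if (j : ℕ) + 1 = (i : ℕ) then -ρ else 0) +
  (if j = i then 1 + ρ ^ 2 - (if (i : ℕ) = 0 then ρ ^ 2 else 0)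
      - (if (i : ℕ) + 1 = n then ρ ^ 2 else 0) else 0)

lemma sum_fin_ite {n m : ℕ} (f : Fin n → ℝ) :
    (∑ k : Fin n, if (k : ℕ) = m then f k else 0) =
      if h : m < n then f ⟨m, h⟩ else 0 := by
  split
  · rename_i h
    rw [Finset.sum_eq_single ⟨m, h⟩]
    · simp
    · intro k _ hk
      rw [if_neg]
      intro hkm
      exact hk (Fin.ext hkm)
    · simp
  · rename_i h
    apply Finset.sum_eq_zero
    intro k _
    rw [if_neg]
    omega

lemma sum_fin_pred {n m : ℕ} (f : Fin n → ℝ) :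
    (∑ k : Fin n, if (k : ℕ) + 1 = m then f k else 0) =
      if h : 1 ≤ m ∧ m - 1 < n then f ⟨m - 1, h.2⟩ else 0 := by
  rcases Nat.eq_zero_or_pos m with hm | hm
  · subst hm
    simp
  · have hc : ∀ k : Fin n, ((k : ℕ) + 1 = m) = ((k : ℕ) = m - 1) := by
      intro k
      apply propext
      omega
    simp_rw [hc]
    rw [sum_fin_ite]
    split
    · rename_i h
      rw [dif_pos ⟨hm, h⟩]
    · rename_i h
      rw [dif_neg]
      omega

lemma Tm_mul_S {n : ℕ} {ρ : ℝ} (S : Matrix (Fin n) (Fin n) ℝ)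
    (hS : ∀ i j : Fin n, S i j = ρ ^ ((i : ℤ) - (j : ℤ)).natAbs) :
    Tm n ρ * S = (1 - ρ ^ 2) • (1 : Matrix (Fin n) (Fin n) ℝ) := by
  ext i j
  rw [Matrix.mul_apply]
  simp only [Tm, add_mul, ite_mul, zero_mul, Finset.sum_add_distrib]
  rw [sum_fin_ite, sum_fin_pred, Finset.sum_ite_eq' Finset.univ i]
  simp only [Finset.mem_univ, if_true]
  simp only [Matrix.smul_apply, Matrix.one_apply, smul_eq_mul, mul_ite, mul_one, mul_zero]
  have ha : (i : ℕ) < n := i.isLt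
  have hb : (j : ℕ) < n := j.isLt
  have hij : (i = j) ↔ ((i : ℕ) = (j : ℕ)) := Fin.ext_iff
  rcases lt_trichotomy (i : ℕ) (j : ℕ) with hab | hab | hab
  · -- a < b
    rw [if_neg (by omega : ¬ i = j)]
    rw [dif_pos (by omega : (i : ℕ) + 1 < n)]
    obtain ⟨d, hd⟩ : ∃ d, (j : ℕ) = (i : ℕ) + 1 + d := ⟨(j : ℕ) - (i : ℕ) - 1, by omega⟩
    by_cases h0 : (i : ℕ) = 0
    · rw [dif_neg (by omega)]
      rw [if_pos h0, if_neg (by omega)]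
      rw [hS, hS]
      rw [(by simp only [Fin.val_mk]; omega : ((((⟨(i : ℕ) + 1, by omega⟩ : Fin n) : ℕ) : ℤ) - (j : ℤ)).natAbs = d)]
      rw [(by omega : (((i : ℕ) : ℤ) - (j : ℤ)).natAbs = d + 1)]
      ring
    · rw [dif_pos ⟨by omega, by omega⟩]
      rw [if_neg h0, if_neg (by omega)]
      rw [hS, hS, hS]
      rw [(by simp only [Fin.val_mk]; omega : ((((⟨(i : ℕ) + 1, by omega⟩ : Fin n) : ℕ) : ℤ) - (j : ℤ)).natAbs = d)]
      rw [(by simp only [Fin.val_mk]; omega : ((((⟨(i : ℕ) - 1, by omega⟩ : Fin n) : ℕ) : ℤ) - (j : ℤ)).natAbs = d + 2)]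
      rw [(by omega : (((i : ℕ) : ℤ) - (j : ℤ)).natAbs = d + 1)]
      ring
  · -- a = b
    rw [if_pos (hij.mpr hab)]
    rw [hS]
    rw [(by omega : (((i : ℕ) : ℤ) - (j : ℤ)).natAbs = 0)]
    by_cases h0 : (i : ℕ) = 0 <;> by_cases hl : (i : ℕ) + 1 = n
    · rw [dif_neg (by omega), dif_neg (by omega), if_pos h0, if_pos hl]
      ring
    · rw [dif_pos (by omega : (i : ℕ) + 1 < n), dif_neg (by omega), if_pos h0, if_neg hl]
      rw [hS]
      rw [(by simp only [Fin.val_mk]; omega : ((((⟨(i : ℕ) + 1, by omega⟩ : Fin n) : ℕ) : ℤ) - (j : ℤ)).natAbs = 1)]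
      ring
    · rw [dif_neg (by omega), dif_pos ⟨by omega, by omega⟩, if_neg h0, if_pos hl]
      rw [hS]
      rw [(by simp only [Fin.val_mk]; omega : ((((⟨(i : ℕ) - 1, by omega⟩ : Fin n) : ℕ) : ℤ) - (j : ℤ)).natAbs = 1)]
      ring
    · rw [dif_pos (by omega : (i : ℕ) + 1 < n), dif_pos ⟨by omega, by omega⟩, if_neg h0,
        if_neg hl]
      rw [hS, hS]
      rw [(by simp only [Fin.val_mk]; omega : ((((⟨(i : ℕ) + 1, by omega⟩ : Fin n) : ℕ) : ℤ) - (j : ℤ)).natAbs = 1)]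
      rw [(by simp only [Fin.val_mk]; omega : ((((⟨(i : ℕ) - 1, by omega⟩ : Fin n) : ℕ) : ℤ) - (j : ℤ)).natAbs = 1)]
      ring
  · -- b < a
    rw [if_neg (by omega : ¬ i = j)]
    obtain ⟨d, hd⟩ : ∃ d, (i : ℕ) = (j : ℕ) + 1 + d := ⟨(i : ℕ) - (j : ℕ) - 1, by omega⟩
    by_cases hl : (i : ℕ) + 1 = n
    · rw [dif_neg (by omega), dif_pos ⟨by omega, by omega⟩, if_neg (by omega), if_pos hl]
      rw [hS, hS]
      rw [(by simp only [Fin.val_mk]; omega : ((((⟨(i : ℕ) - 1, by omega⟩ : Fin n) : ℕ) : ℤ) - (j : ℤ)).natAbs = d)]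
      rw [(by omega : (((i : ℕ) : ℤ) - (j : ℤ)).natAbs = d + 1)]
      ring
    · rw [dif_pos (by omega : (i : ℕ) + 1 < n), dif_pos ⟨by omega, by omega⟩,
        if_neg (by omega), if_neg hl]
      rw [hS, hS, hS]
      rw [(by simp only [Fin.val_mk]; omega : ((((⟨(i : ℕ) + 1, by omega⟩ : Fin n) : ℕ) : ℤ) - (j : ℤ)).natAbs = d + 2)]
      rw [(by simp only [Fin.val_mk]; omega : ((((⟨(i : ℕ) - 1, by omega⟩ : Fin n) : ℕ) : ℤ) - (j : ℤ)).natAbs = d)]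
      rw [(by omega : (((i : ℕ) : ℤ) - (j : ℤ)).natAbs = d + 1)]
      ring

lemma Tm_quadform {n : ℕ} (hn : 0 < n) {ρ : ℝ} (hρ0 : 0 ≤ ρ) (hρ1 : ρ ≤ 1)
    (x : Fin n → ℝ) :
    (1 - ρ) ^ 2 * (x ⬝ᵥ x) ≤ x ⬝ᵥ (Tm n ρ).mulVec x := by
  set y : ℕ → ℝ := fun k => if h : k < n then x ⟨k, h⟩ else 0 with hy
  have hxy : ∀ i : Fin n, x i = y (i : ℕ) := by
    intro i
    simp [hy, i.isLt]
  set d : ℕ → ℝ := fun k => 1 + ρ ^ 2 - (if k = 0 then ρ ^ 2 else 0)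
      - (if k + 1 = n then ρ ^ 2 else 0) with hd
  -- inner sums
  have inner : ∀ i : Fin n, (∑ j, Tm n ρ i j * x j)
      = (-ρ) * y ((i : ℕ) + 1) + (if 1 ≤ (i : ℕ) then (-ρ) * y ((i : ℕ) - 1) else 0)
        + d (i : ℕ) * y (i : ℕ) := by
    intro i
    simp only [Tm, add_mul, ite_mul, zero_mul, Finset.sum_add_distrib]
    rw [sum_fin_ite, sum_fin_pred, Finset.sum_ite_eq' Finset.univ i]
    simp only [Finset.mem_univ, if_true]
    congr 1
    · congr 1
      · split
        · rename_i h
          simp [hy, h]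
        · rename_i h
          simp [hy, h]
      · split
        · rename_i h
          rw [if_pos h.1]
          simp [hy, h.2]
        · rename_i h
          rw [if_neg (by omega)]
    · rw [hxy i, hd]
  have key : x ⬝ᵥ (Tm n ρ).mulVec x
      = ∑ k ∈ Finset.range n, y k * ((-ρ) * y (k + 1)
          + (if 1 ≤ k then (-ρ) * y (k - 1) else 0) + d k * y k) := by
    rw [dotProduct]
    simp only [Matrix.mulVec, dotProduct]
    calc ∑ i : Fin n, x i * ∑ j, Tm n ρ i j * x j
        = ∑ i : Fin n, (fun k => y k * ((-ρ) * y (k + 1)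
            + (if 1 ≤ k then (-ρ) * y (k - 1) else 0) + d k * y k)) (i : ℕ) := by
          apply Finset.sum_congr rfl
          intro i _
          rw [inner i, hxy i]
      _ = _ := Fin.sum_univ_eq_sum_range
          (fun k => y k * ((-ρ) * y (k + 1)
            + (if 1 ≤ k then (-ρ) * y (k - 1) else 0) + d k * y k)) n
  -- split into pieces
  have key2 : x ⬝ᵥ (Tm n ρ).mulVec x
      = (-ρ) * (∑ k ∈ Finset.range n, y k * y (k + 1))
        + (-ρ) * (∑ k ∈ Finset.range n, if 1 ≤ k then y k * y (k - 1) else 0)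
        + ∑ k ∈ Finset.range n, d k * y k ^ 2 := by
    rw [key, Finset.mul_sum, Finset.mul_sum, ← Finset.sum_add_distrib,
      ← Finset.sum_add_distrib]
    apply Finset.sum_congr rfl
    intro k _
    split <;> ring
  -- reindexing
  obtain ⟨m, rfl⟩ : ∃ m, n = m + 1 := ⟨n - 1, by omega⟩
  have R1 : ∑ k ∈ Finset.range (m + 1), y k * y (k + 1)
      = ∑ k ∈ Finset.range m, y k * y (k + 1) := by
    rw [Finset.sum_range_succ]
    have : y (m + 1) = 0 := by rw [hy]; simp
    rw [this, mul_zero, add_zero]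
  have R2 : ∑ k ∈ Finset.range (m + 1), (if 1 ≤ k then y k * y (k - 1) else 0)
      = ∑ k ∈ Finset.range m, y k * y (k + 1) := by
    rw [Finset.sum_range_succ']
    simp only [Nat.le_add_left 1, if_true, Nat.add_sub_cancel, if_neg (by omega : ¬ 1 ≤ 0),
      add_zero]
    apply Finset.sum_congr rfl
    intro k _
    ring
  -- sums of squares
  set P := ∑ k ∈ Finset.range (m + 1), y k ^ 2 with hP
  have E1 : ∑ k ∈ Finset.range m, y k ^ 2 = P - y m ^ 2 := by
    rw [hP, Finset.sum_range_succ]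
    ring
  have E2 : ∑ k ∈ Finset.range m, y (k + 1) ^ 2 = P - y 0 ^ 2 := by
    rw [hP, Finset.sum_range_succ']
    ring
  -- diagonal sum
  have D1 : ∑ k ∈ Finset.range (m + 1), d k * y k ^ 2
      = (1 + ρ ^ 2) * P - ρ ^ 2 * y 0 ^ 2 - ρ ^ 2 * y m ^ 2 := by
    simp only [hd, sub_mul, ite_mul, zero_mul]
    rw [Finset.sum_sub_distrib, Finset.sum_sub_distrib]
    congr 1
    · congr 1
      · rw [hP, Finset.mul_sum]
      · rw [Finset.sum_ite_eq' (Finset.range (m + 1)) 0 (fun k => ρ ^ 2 * y k ^ 2),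
          if_pos (Finset.mem_range.mpr (by omega))]
    · have hc : ∀ k, (k + 1 = m + 1) = (k = m) := by intro k; apply propext; omega
      simp_rw [hc]
      rw [Finset.sum_ite_eq' (Finset.range (m + 1)) m (fun k => ρ ^ 2 * y k ^ 2),
        if_pos (Finset.mem_range.mpr (by omega))]
  -- cross term bound
  have C1 : 2 * ∑ k ∈ Finset.range m, y k * y (k + 1)
      ≤ (P - y m ^ 2) + (P - y 0 ^ 2) := by
    rw [← E1, ← E2, Finset.mul_sum, ← Finset.sum_add_distrib]
    apply Finset.sum_le_sum
    intro k _
    nlinarith [sq_nonneg (y k - y (k + 1))]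
  have hxx : x ⬝ᵥ x = P := by
    rw [dotProduct, hP]
    calc ∑ i : Fin (m + 1), x i * x i
        = ∑ i : Fin (m + 1), (fun k => y k ^ 2) (i : ℕ) := by
          apply Finset.sum_congr rfl
          intro i _
          rw [hxy i]
          ring
      _ = _ := Fin.sum_univ_eq_sum_range (fun k => y k ^ 2) (m + 1)
  rw [key2, R1, R2, D1, hxx]
  nlinarith [sq_nonneg (y 0), sq_nonneg (y m), mul_nonneg hρ0 (sub_nonneg.mpr hρ1),
    mul_nonneg (mul_nonneg hρ0 (sub_nonneg.mpr hρ1)) (sq_nonneg (y 0)),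
    mul_nonneg (mul_nonneg hρ0 (sub_nonneg.mpr hρ1)) (sq_nonneg (y m)),
    mul_le_mul_of_nonneg_left C1 hρ0]

/-- for the AR(1) Toeplitz matrix `S` with entries `ρ^{|i-j|}`
(`ρ ∈ [0,1)`), `r > 1`, and `σ² > ((r-1)/r)·(1+ρ)/(1-ρ)`, the matrix
`(1-r)Iₙ + rσ² S⁻¹` is positive definite, and the `r`-th moment of the
likelihood ratio between `N(0,S)` and `N(0,σ²Iₙ)` is finite. -/
theorem toeplitz_feasibility_and_finiteness (n : ℕ) (hn : 1 ≤ n) (ρ : ℝ)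
    (hρ : ρ ∈ Set.Ico (0 : ℝ) 1)
    (S : Matrix (Fin n) (Fin n) ℝ)
    (hS : ∀ i j : Fin n, S i j = ρ ^ ((i : ℤ) - (j : ℤ)).natAbs)
    (r σ2 : ℝ) (hr : 1 < r)
    (hσ2 : (r - 1) / r * ((1 + ρ) / (1 - ρ)) < σ2) :
    ((1 - r) • (1 : Matrix (Fin n) (Fin n) ℝ) + (r * σ2) • S⁻¹).PosDef ∧
      Integrable
        (fun x : Fin n → ℝ =>
          (mvGaussPdf S x / mvGaussPdf (σ2 • (1 : Matrix (Fin n) (Fin n) ℝ)) x) ^ r *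
            mvGaussPdf (σ2 • (1 : Matrix (Fin n) (Fin n) ℝ)) x)
        volume := by
  obtain ⟨hρ0, hρ1⟩ := hρ
  have h1mρ : 0 < 1 - ρ := by linarith
  have h1pρ : 0 < 1 + ρ := by linarith
  have hρ2 : 0 < 1 - ρ ^ 2 := by nlinarith
  have hr0 : 0 < r := by linarith
  set c₀ : ℝ := (1 - ρ) / (1 + ρ) with hc₀def
  have hc0 : 0 < c₀ := div_pos h1mρ h1pρ
  have hσ2pos : 0 < σ2 :=
    lt_trans (mul_pos (div_pos (by linarith) hr0) (div_pos h1pρ h1mρ)) hσ2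
  have hTS := Tm_mul_S S hS
  have hleft : ((1 - ρ ^ 2)⁻¹ • Tm n ρ) * S = 1 := by
    rw [Matrix.smul_mul, hTS, smul_smul, inv_mul_cancel₀ (ne_of_gt hρ2), one_smul]
  have hSinv : S⁻¹ = (1 - ρ ^ 2)⁻¹ • Tm n ρ := Matrix.inv_eq_left_inv hleft
  have hQ : ∀ x : Fin n → ℝ, c₀ * (x ⬝ᵥ x) ≤ x ⬝ᵥ S⁻¹ *ᵥ x := by
    intro x
    rw [hSinv, Matrix.smul_mulVec, dotProduct_smul, smul_eq_mul]
    have h := Tm_quadform (by omega) hρ0 (le_of_lt hρ1) x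
    have hco : c₀ * (x ⬝ᵥ x) = (1 - ρ ^ 2)⁻¹ * ((1 - ρ) ^ 2 * (x ⬝ᵥ x)) := by
      rw [hc₀def]
      field_simp
      ring
    rw [hco]
    exact mul_le_mul_of_nonneg_left h (le_of_lt (inv_pos.mpr hρ2))
  have hdotpos : ∀ x : Fin n → ℝ, x ≠ 0 → 0 < x ⬝ᵥ x := by
    intro x hx
    refine lt_of_le_of_ne (Finset.sum_nonneg fun i _ => mul_self_nonneg _) ?_
    intro h
    exact hx (dotProduct_self_eq_zero.mp h.symm)
  have hermS : S.IsHermitian := by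
    ext i j
    rw [Matrix.conjTranspose_apply, hS, hS, star_trivial]
    congr 1
    omega
  have hermSinv : (S⁻¹).IsHermitian := hermS.inv
  have hstar : ∀ x : Fin n → ℝ, star x = x := fun x => funext fun i => rfl
  have hμ : 0 < 1 - r + r * σ2 * c₀ := by
    have h2 : (r - 1) / r < σ2 * c₀ := by
      have e : (r - 1) / r = ((r - 1) / r * ((1 + ρ) / (1 - ρ))) * c₀ := by
        rw [hc₀def]
        field_simp
      rw [e]
      exact mul_lt_mul_of_pos_right hσ2 hc0
    have h3 : r * ((r - 1) / r) = r - 1 := by field_simp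
    nlinarith [mul_lt_mul_of_pos_left h2 hr0]
  have hformA : ∀ x : Fin n → ℝ,
      x ⬝ᵥ (((1 - r) • (1 : Matrix (Fin n) (Fin n) ℝ) + (r * σ2) • S⁻¹) *ᵥ x)
        = (1 - r) * (x ⬝ᵥ x) + (r * σ2) * (x ⬝ᵥ S⁻¹ *ᵥ x) := by
    intro x
    rw [Matrix.add_mulVec, Matrix.smul_mulVec, Matrix.smul_mulVec,
      Matrix.one_mulVec, dotProduct_add, dotProduct_smul, dotProduct_smul,
      smul_eq_mul, smul_eq_mul]
  have hAlow : ∀ x : Fin n → ℝ, (1 - r + r * σ2 * c₀) * (x ⬝ᵥ x)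
      ≤ x ⬝ᵥ (((1 - r) • (1 : Matrix (Fin n) (Fin n) ℝ) + (r * σ2) • S⁻¹) *ᵥ x) := by
    intro x
    rw [hformA x]
    have h4 : (r * σ2) * (c₀ * (x ⬝ᵥ x)) ≤ (r * σ2) * (x ⬝ᵥ S⁻¹ *ᵥ x) :=
      mul_le_mul_of_nonneg_left (hQ x) (le_of_lt (mul_pos hr0 hσ2pos))
    nlinarith [h4]
  have hermA : ((1 - r) • (1 : Matrix (Fin n) (Fin n) ℝ) + (r * σ2) • S⁻¹).IsHermitian := by
    rw [Matrix.IsHermitian, Matrix.conjTranspose_add, Matrix.conjTranspose_smul,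
      Matrix.conjTranspose_smul, Matrix.conjTranspose_one, hermSinv.eq,
      star_trivial, star_trivial]
  have hPD : ((1 - r) • (1 : Matrix (Fin n) (Fin n) ℝ) + (r * σ2) • S⁻¹).PosDef := by
    refine Matrix.posDef_iff_dotProduct_mulVec.mpr ⟨hermA, fun x hx => ?_⟩
    rw [hstar x]
    exact lt_of_lt_of_le (mul_pos hμ (hdotpos x hx)) (hAlow x)
  refine ⟨hPD, ?_⟩
  -- determinant of S is positive
  have hSinvPD : (S⁻¹).PosDef := by
    refine Matrix.posDef_iff_dotProduct_mulVec.mpr ⟨hermSinv, fun x hx => ?_⟩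
    rw [hstar x]
    exact lt_of_lt_of_le (mul_pos hc0 (hdotpos x hx)) (hQ x)
  have hdetS : 0 < S.det := by
    have h5 : (S⁻¹).det = S.det⁻¹ := by rw [Matrix.det_nonsing_inv, Ring.inverse_eq_inv]
    have h6 : 0 < (S⁻¹).det := hSinvPD.det_pos
    rw [h5] at h6
    exact inv_pos.mp h6
  -- explicit form of the densities
  have hM2inv : (σ2 • (1 : Matrix (Fin n) (Fin n) ℝ))⁻¹ = σ2⁻¹ • 1 :=
    Matrix.inv_eq_left_inv (by
      rw [Matrix.smul_mul, Matrix.one_mul, smul_smul, inv_mul_cancel₀ (ne_of_gt hσ2pos),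
        one_smul])
  have hdetM2 : (σ2 • (1 : Matrix (Fin n) (Fin n) ℝ)).det = σ2 ^ n := by
    rw [Matrix.det_smul, Matrix.det_one, mul_one, Fintype.card_fin]
  set c1 : ℝ := ((2 * Real.pi) ^ (n : ℝ) * S.det) ^ (-(1 : ℝ) / 2) with hc1def
  set c2 : ℝ := ((2 * Real.pi) ^ (n : ℝ) * σ2 ^ n) ^ (-(1 : ℝ) / 2) with hc2def
  have h2pi : 0 < (2 * Real.pi) ^ (n : ℝ) :=
    Real.rpow_pos_of_pos (by positivity) _
  have hc1 : 0 < c1 := Real.rpow_pos_of_pos (mul_pos h2pi hdetS) _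
  have hc2 : 0 < c2 := Real.rpow_pos_of_pos (mul_pos h2pi (pow_pos hσ2pos n)) _
  have hpdf2 : ∀ x : Fin n → ℝ, mvGaussPdf (σ2 • (1 : Matrix (Fin n) (Fin n) ℝ)) x
      = c2 * Real.exp (-(σ2⁻¹ * (x ⬝ᵥ x)) / 2) := by
    intro x
    rw [mvGaussPdf, hdetM2, hM2inv, Matrix.smul_mulVec, Matrix.one_mulVec,
      dotProduct_smul, smul_eq_mul, hc2def]
  have hpdf1 : ∀ x : Fin n → ℝ, mvGaussPdf S x
      = c1 * Real.exp (-(x ⬝ᵥ S⁻¹ *ᵥ x) / 2) := fun x => rfl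
  set A : Matrix (Fin n) (Fin n) ℝ :=
    (1 - r) • (1 : Matrix (Fin n) (Fin n) ℝ) + (r * σ2) • S⁻¹ with hAdef
  set K : ℝ := (c1 / c2) ^ r * c2 with hKdef
  have heq : ∀ x : Fin n → ℝ,
      (mvGaussPdf S x / mvGaussPdf (σ2 • (1 : Matrix (Fin n) (Fin n) ℝ)) x) ^ r *
          mvGaussPdf (σ2 • (1 : Matrix (Fin n) (Fin n) ℝ)) x
        = K * Real.exp (-(x ⬝ᵥ A *ᵥ x) / (2 * σ2)) := by
    intro x
    rw [hpdf1, hpdf2]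
    rw [mul_div_mul_comm, ← Real.exp_sub]
    rw [Real.mul_rpow (le_of_lt (div_pos hc1 hc2)) (le_of_lt (Real.exp_pos _))]
    rw [← Real.exp_mul]
    have hformA' : x ⬝ᵥ A *ᵥ x = (1 - r) * (x ⬝ᵥ x) + (r * σ2) * (x ⬝ᵥ S⁻¹ *ᵥ x) :=
      hformA x
    have hexp : (-(x ⬝ᵥ S⁻¹ *ᵥ x) / 2 - -(σ2⁻¹ * (x ⬝ᵥ x)) / 2) * r + -(σ2⁻¹ * (x ⬝ᵥ x)) / 2
        = -(x ⬝ᵥ A *ᵥ x) / (2 * σ2) := by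
      rw [hformA']
      field_simp
      ring
    calc (c1 / c2) ^ r * Real.exp ((-(x ⬝ᵥ S⁻¹ *ᵥ x) / 2 - -(σ2⁻¹ * (x ⬝ᵥ x)) / 2) * r) *
          (c2 * Real.exp (-(σ2⁻¹ * (x ⬝ᵥ x)) / 2))
        = K * Real.exp ((-(x ⬝ᵥ S⁻¹ *ᵥ x) / 2 - -(σ2⁻¹ * (x ⬝ᵥ x)) / 2) * r +
            -(σ2⁻¹ * (x ⬝ᵥ x)) / 2) := by
          rw [Real.exp_add, hKdef]
          ring
      _ = K * Real.exp (-(x ⬝ᵥ A *ᵥ x) / (2 * σ2)) := by rw [hexp]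
  have hfun : (fun x : Fin n → ℝ =>
      (mvGaussPdf S x / mvGaussPdf (σ2 • (1 : Matrix (Fin n) (Fin n) ℝ)) x) ^ r *
        mvGaussPdf (σ2 • (1 : Matrix (Fin n) (Fin n) ℝ)) x)
      = fun x => K * Real.exp (-(x ⬝ᵥ A *ᵥ x) / (2 * σ2)) := funext heq
  rw [hfun]
  apply Integrable.const_mul
  set b : ℝ := (1 - r + r * σ2 * c₀) / (2 * σ2) with hbdef
  have hb : 0 < b := div_pos hμ (by linarith)
  have hg : Integrable (fun x : Fin n → ℝ => ∏ i, Real.exp (-b * x i ^ 2)) :=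
    Integrable.fintype_prod (𝕜 := ℝ) fun i => integrable_exp_neg_mul_sq hb
  have hcont : Continuous fun x : Fin n → ℝ => Real.exp (-(x ⬝ᵥ A *ᵥ x) / (2 * σ2)) := by
    apply Real.continuous_exp.comp
    apply Continuous.div_const
    apply Continuous.neg
    simp only [dotProduct, Matrix.mulVec]
    apply continuous_finset_sum
    intro i _
    exact (continuous_apply i).mul
      (continuous_finset_sum _ fun j _ => continuous_const.mul (continuous_apply j))
  apply Integrable.mono' hg hcont.aestronglyMeasurable
  refine Filter.Eventually.of_forall fun x => ?_
  have hXsum : x ⬝ᵥ x = ∑ i, x i ^ 2 := by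
    simp [dotProduct, sq]
  rw [Real.norm_eq_abs, abs_of_pos (Real.exp_pos _), ← Real.exp_sum]
  apply Real.exp_le_exp.mpr
  have h7 : -(x ⬝ᵥ A *ᵥ x) / (2 * σ2) ≤ -((1 - r + r * σ2 * c₀) * (x ⬝ᵥ x)) / (2 * σ2) :=
    (div_le_div_iff_of_pos_right (by linarith)).mpr (neg_le_neg (hAlow x))
  refine le_trans h7 (le_of_eq ?_)
  rw [hXsum, Finset.mul_sum, neg_div, Finset.sum_div, ← Finset.sum_neg_distrib]
  apply Finset.sum_congr rfl
  intro i _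
  rw [hbdef]
  field_simp
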